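/- Let f_1, …, f_N : ℝ^d → ℝ each be μ-strongly convex (μ ≥ 0) and L-smooth, let f = (1/N)∑_{c=1}^N f_c have minimizer w*, and let u_1, …, u_N ∈ ℝ^d be arbitrary points. With ū = (1/N)∑_{c=1}^N u_c, ḡ = (1/N)∑_{c=1}^N ∇f_c(u_c), and V = (1/N)∑_{c=1}^N ‖u_c − ū‖², it holds that ⟨ū − w*, ḡ⟩ ≥ f(ū) − f(w*) − (L/2)V + (μ/2)‖ū − w*‖². -/

import Mathlib

open scoped RealInnerProductSpace

theorem descent_lemma {E : Type*} [NormedAddCommGroup E] [InnerProductSpace ℝ E]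
    [CompleteSpace E]
    {g : E → ℝ} {L : ℝ} (hL : 0 ≤ L) (hdiff : Differentiable ℝ g)
    (hsmooth : ∀ x y : E, ‖gradient g x - gradient g y‖ ≤ L * ‖x - y‖) (x y : E) :
    g y ≤ g x + ⟪gradient g x, y - x⟫ + L / 2 * ‖y - x‖ ^ 2 := by
  set v := y - x with hv
  have hgradcont : Continuous (gradient g) := by
    have : LipschitzWith L.toNNReal (gradient g) := by
      apply LipschitzWith.of_dist_le_mul
      intro a b
      simpa [dist_eq_norm, Real.coe_toNNReal L hL] using hsmooth a b
    exact this.continuous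
  have key : ∀ t : ℝ, HasDerivAt (fun t : ℝ => g (x + t • v))
      ⟪gradient g (x + t • v), v⟫ t := by
    intro t
    have h1 : HasDerivAt (fun t : ℝ => x + t • v) v t := by
      simpa using ((hasDerivAt_id t).smul_const v).const_add x
    have h2 := ((hdiff (x + t • v)).hasGradientAt.hasFDerivAt).comp_hasDerivAt t h1
    simpa [Function.comp_def] using h2
  set F : ℝ → ℝ := fun t => ⟪gradient g (x + t • v), v⟫ with hF
  set G : ℝ → ℝ := fun t => ⟪gradient g x, v⟫ + L * ‖v‖ ^ 2 * t with hG
  have hcont : Continuous F :=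
    (hgradcont.comp (continuous_const.add (continuous_id.smul continuous_const))).inner
      continuous_const
  have hGcont : Continuous G :=
    continuous_const.add (continuous_const.mul continuous_id)
  have hxy : g y - g x = ∫ t in (0:ℝ)..1, F t := by
    have := intervalIntegral.integral_eq_sub_of_hasDerivAt (f := fun t : ℝ => g (x + t • v))
      (fun t _ => key t) (hcont.intervalIntegrable 0 1)
    rw [this]; simp [hv]
  have hmono : (∫ t in (0:ℝ)..1, F t) ≤ ∫ t in (0:ℝ)..1, G t := by
    apply intervalIntegral.integral_mono_on zero_le_one
      (hcont.intervalIntegrable 0 1) (hGcont.intervalIntegrable 0 1)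
    intro t ht
    have h1 : ⟪gradient g (x + t • v) - gradient g x, v⟫
        ≤ ‖gradient g (x + t • v) - gradient g x‖ * ‖v‖ := real_inner_le_norm _ _
    have h2 : ‖gradient g (x + t • v) - gradient g x‖ ≤ L * (t * ‖v‖) := by
      have := hsmooth (x + t • v) x
      simpa [norm_smul, abs_of_nonneg ht.1] using this
    have h3 : ⟪gradient g (x + t • v) - gradient g x, v⟫ ≤ L * ‖v‖ ^ 2 * t := by
      calc ⟪gradient g (x + t • v) - gradient g x, v⟫
          ≤ ‖gradient g (x + t • v) - gradient g x‖ * ‖v‖ := h1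
        _ ≤ L * (t * ‖v‖) * ‖v‖ := mul_le_mul_of_nonneg_right h2 (norm_nonneg v)
        _ = L * ‖v‖ ^ 2 * t := by ring
    have h4 : ⟪gradient g (x + t • v) - gradient g x, v⟫
        = F t - ⟪gradient g x, v⟫ := by
      simp [hF, inner_sub_left]
    simp only [hG]
    linarith [h4 ▸ h3]
  have hval : (∫ t in (0:ℝ)..1, G t) = ⟪gradient g x, v⟫ + L / 2 * ‖v‖ ^ 2 := by
    simp only [hG]
    rw [intervalIntegral.integral_add intervalIntegrable_const
      (intervalIntegral.intervalIntegrable_id.const_mul _)]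
    rw [intervalIntegral.integral_const_mul]
    simp [integral_id]
    ring
  linarith [hmono, hval ▸ hmono]

theorem jensen_norm_sq {E : Type*} [NormedAddCommGroup E] [InnerProductSpace ℝ E]
    {N : ℕ} (hN : 0 < N) (v : Fin N → E) :
    ‖(N : ℝ)⁻¹ • ∑ c, v c‖ ^ 2 ≤ (N : ℝ)⁻¹ * ∑ c, ‖v c‖ ^ 2 := by
  have hNpos : (0:ℝ) < N := Nat.cast_pos.mpr hN
  have h1 : ‖∑ c, v c‖ ≤ ∑ c, ‖v c‖ := norm_sum_le _ _
  have h2 : (∑ c, ‖v c‖) ^ 2 ≤ (N : ℝ) * ∑ c, ‖v c‖ ^ 2 := by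
    have := sq_sum_le_card_mul_sum_sq (s := (Finset.univ : Finset (Fin N)))
      (f := fun c => ‖v c‖)
    simpa using this
  have h3 : ‖∑ c, v c‖ ^ 2 ≤ (N : ℝ) * ∑ c, ‖v c‖ ^ 2 :=
    le_trans (by nlinarith [norm_nonneg (∑ c, v c)]) h2
  have h4 : ‖(N : ℝ)⁻¹ • ∑ c, v c‖ ^ 2 = (N : ℝ)⁻¹ ^ 2 * ‖∑ c, v c‖ ^ 2 := by
    rw [norm_smul]; simp [abs_of_nonneg (le_of_lt (inv_pos.mpr hNpos))]; ring
  rw [h4]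
  have : (N : ℝ)⁻¹ ^ 2 * ((N:ℝ) * ∑ c, ‖v c‖ ^ 2) = (N : ℝ)⁻¹ * ∑ c, ‖v c‖ ^ 2 := by
    field_simp
  nlinarith [sq_nonneg ((N:ℝ)⁻¹)]

/-- Lower bound on the inner product between the averaged local gradient and the
direction to the optimum. -/
theorem avg_gradient_inner_bound
    {E : Type*} [NormedAddCommGroup E] [InnerProductSpace ℝ E]
    [FiniteDimensional ℝ E]
    {N : ℕ} (hN : 0 < N) (f : Fin N → E → ℝ) (L mus : ℝ) (hL : 0 < L)
    (hmus : 0 ≤ mus)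
    (hdiff : ∀ c, Differentiable ℝ (f c))
    (hsmooth : ∀ c (x y : E), ‖gradient (f c) x - gradient (f c) y‖ ≤ L * ‖x - y‖)
    (hsc : ∀ c (x y : E),
      f c y ≥ f c x + ⟪gradient (f c) x, y - x⟫ + mus / 2 * ‖y - x‖ ^ 2)
    (wstar : E)
    (hmin : ∀ x, (N : ℝ)⁻¹ * ∑ c, f c wstar ≤ (N : ℝ)⁻¹ * ∑ c, f c x)
    (u : Fin N → E) :
    ⟪(N : ℝ)⁻¹ • ∑ c, u c - wstar, (N : ℝ)⁻¹ • ∑ c, gradient (f c) (u c)⟫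
      ≥ (N : ℝ)⁻¹ * ∑ c, f c ((N : ℝ)⁻¹ • ∑ c', u c')
          - (N : ℝ)⁻¹ * ∑ c, f c wstar
        - L / 2 * ((N : ℝ)⁻¹ * ∑ c, ‖u c - (N : ℝ)⁻¹ • ∑ c', u c'‖ ^ 2)
        + mus / 2 * ‖(N : ℝ)⁻¹ • ∑ c, u c - wstar‖ ^ 2 := by
  have hNpos : (0:ℝ) < N := Nat.cast_pos.mpr hN
  set ub : E := (N : ℝ)⁻¹ • ∑ c, u c with hub
  have hper : ∀ c, ⟪ub - wstar, gradient (f c) (u c)⟫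
      ≥ f c ub - f c wstar - L / 2 * ‖u c - ub‖ ^ 2
        + mus / 2 * ‖u c - wstar‖ ^ 2 := by
    intro c
    set g := gradient (f c) (u c) with hg
    have hdes : f c ub ≤ f c (u c) + ⟪g, ub - u c⟫ + L / 2 * ‖ub - u c‖ ^ 2 :=
      descent_lemma hL.le (hdiff c) (hsmooth c) (u c) ub
    have hstr := hsc c (u c) wstar
    have hsplit : ⟪ub - wstar, g⟫ = ⟪g, ub - u c⟫ + ⟪g, u c - wstar⟫ := by
      rw [real_inner_comm, ← inner_add_right]
      congr 1; abel
    have hneg : ⟪g, wstar - u c⟫ = -⟪g, u c - wstar⟫ := by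
      rw [← inner_neg_right]; congr 1; abel
    have hn1 : ‖wstar - u c‖ = ‖u c - wstar‖ := norm_sub_rev _ _
    have hn2 : ‖ub - u c‖ = ‖u c - ub‖ := norm_sub_rev _ _
    rw [hsplit]
    rw [hneg, hn1] at hstr
    rw [hn2] at hdes
    linarith
  have hsum : ∑ c, ⟪ub - wstar, gradient (f c) (u c)⟫
      ≥ ∑ c, f c ub - ∑ c, f c wstar - L / 2 * ∑ c, ‖u c - ub‖ ^ 2
        + mus / 2 * ∑ c, ‖u c - wstar‖ ^ 2 := by
    rw [Finset.mul_sum, Finset.mul_sum]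
    rw [show (∑ c, f c ub) - ∑ c, f c wstar - ∑ c, L / 2 * ‖u c - ub‖ ^ 2
        + ∑ c, mus / 2 * ‖u c - wstar‖ ^ 2
        = ∑ c, (f c ub - f c wstar - L / 2 * ‖u c - ub‖ ^ 2
            + mus / 2 * ‖u c - wstar‖ ^ 2) by
      rw [← Finset.sum_sub_distrib, ← Finset.sum_sub_distrib, ← Finset.sum_add_distrib]]
    exact Finset.sum_le_sum fun c _ => hper c
  have hlhs : ⟪ub - wstar, (N : ℝ)⁻¹ • ∑ c, gradient (f c) (u c)⟫
      = (N : ℝ)⁻¹ * ∑ c, ⟪ub - wstar, gradient (f c) (u c)⟫ := by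
    rw [real_inner_smul_right, inner_sum]
  have hjen : ‖ub - wstar‖ ^ 2 ≤ (N : ℝ)⁻¹ * ∑ c, ‖u c - wstar‖ ^ 2 := by
    have key : (N : ℝ)⁻¹ • ∑ c, (u c - wstar) = ub - wstar := by
      rw [Finset.sum_sub_distrib, smul_sub, Finset.sum_const, Finset.card_univ,
        Fintype.card_fin, hub]
      congr 1
      rw [← Nat.cast_smul_eq_nsmul ℝ, smul_smul, inv_mul_cancel₀ (ne_of_gt hNpos), one_smul]
    have := jensen_norm_sq hN (fun c => u c - wstar)
    rwa [key] at this
  rw [hlhs]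
  have hNinv : (0:ℝ) < (N:ℝ)⁻¹ := inv_pos.mpr hNpos
  have h1 : (N : ℝ)⁻¹ * ∑ c, ⟪ub - wstar, gradient (f c) (u c)⟫
      ≥ (N : ℝ)⁻¹ * (∑ c, f c ub - ∑ c, f c wstar - L / 2 * ∑ c, ‖u c - ub‖ ^ 2
        + mus / 2 * ∑ c, ‖u c - wstar‖ ^ 2) :=
    mul_le_mul_of_nonneg_left hsum hNinv.le
  have h2 : mus / 2 * ‖ub - wstar‖ ^ 2 ≤ mus / 2 * ((N : ℝ)⁻¹ * ∑ c, ‖u c - wstar‖ ^ 2) :=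
    mul_le_mul_of_nonneg_left hjen (by linarith)
  nlinarith [h1, h2]
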